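/- If a Hamiltonian cycle of the zebra exists on {0,1}^15 (consecutive vertices at Hamming distance 13), then for every k ≥ 15 a Hamiltonian cycle of the zebra exists on {0,1}^k. -/

import Mathlib

namespace Stmt13Aux

/-- Flip the first 12 coordinates. -/
def flip12 {k : ℕ} (v : Fin k → Bool) : Fin k → Bool :=
  fun j => xor (decide (j.val < 12)) (v j)

lemma flip12_invol {k : ℕ} (v : Fin k → Bool) : flip12 (flip12 v) = v := by
  funext j; simp [flip12]

lemma flip12_inj {k : ℕ} : Function.Injective (flip12 (k := k)) := by
  intro v w h
  have := congrArg flip12 h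
  rwa [flip12_invol, flip12_invol] at this

lemma ham_flip12 {k : ℕ} (v w : Fin k → Bool) :
    hammingDist (flip12 v) (flip12 w) = hammingDist v w := by
  unfold hammingDist
  congr 1
  apply Finset.filter_congr
  intro j _
  simp only [flip12, ne_eq, Bool.xor_left_inj, Bool.xor_right_inj]

lemma ham_flip12_self {k : ℕ} (hk : 12 ≤ k) (v : Fin k → Bool) :
    hammingDist v (flip12 v) = 12 := by
  unfold hammingDist
  have h1 : (Finset.univ.filter fun j : Fin k => v j ≠ flip12 v j)
      = Finset.univ.filter fun j : Fin k => j.val < 12 := by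
    apply Finset.filter_congr
    intro j _
    simp only [flip12]
    by_cases hj : j.val < 12 <;> cases v j <;> simp [hj]
  rw [h1]
  have h2 : (Finset.univ.filter fun j : Fin k => j.val < 12)
      = Finset.map (Fin.castLEEmb hk) Finset.univ := by
    ext j
    simp only [Finset.mem_filter, Finset.mem_univ, true_and, Finset.mem_map,
      Fin.castLEEmb_apply]
    constructor
    · intro hj; exact ⟨⟨j.val, hj⟩, by ext; simp [Fin.castLE]⟩
    · rintro ⟨a, rfl, -⟩
      exact a.isLt
  rw [h2, Finset.card_map, Finset.card_univ, Fintype.card_fin]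

lemma ham_snoc {k : ℕ} (v w : Fin k → Bool) (a b : Bool) :
    hammingDist (Fin.snoc v a : Fin (k+1) → Bool) (Fin.snoc w b) =
      hammingDist v w + if a = b then 0 else 1 := by
  unfold hammingDist
  rw [Finset.card_filter, Finset.card_filter, Fin.sum_univ_castSucc]
  simp only [Fin.snoc_castSucc, Fin.snoc_last]
  congr 1
  by_cases hab : a = b <;> simp [hab]

lemma snoc_inj {k : ℕ} {v w : Fin k → Bool} {a b : Bool}
    (h : (Fin.snoc v a : Fin (k+1) → Bool) = Fin.snoc w b) : v = w ∧ a = b := by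
  constructor
  · funext j
    have := congrFun h j.castSucc
    simpa using this
  · have := congrFun h (Fin.last k)
    simpa using this

end Stmt13Aux

open Stmt13Aux in
theorem stmt_13
    (h : ∃ f : ZMod (2 ^ 15) → (Fin 15 → Bool), Function.Bijective f ∧
      ∀ i, hammingDist (f i) (f (i + 1)) = 13) :
    ∀ k : ℕ, 15 ≤ k → ∃ g : ZMod (2 ^ k) → (Fin k → Bool), Function.Bijective g ∧
      ∀ i, hammingDist (g i) (g (i + 1)) = 13 := by
  intro k hk
  induction k, hk using Nat.le_induction with
  | base => exact h
  | succ k hk ih =>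
    obtain ⟨g, hgb, hgd⟩ := ih
    haveI : NeZero (2 ^ (k+1)) := ⟨(Nat.pow_pos (by norm_num)).ne'⟩
    haveI : NeZero (2 ^ k) := ⟨(Nat.pow_pos (by norm_num)).ne'⟩
    have h2 : 2 ^ (k+1) = 2 * 2 ^ k := by rw [pow_succ]; ring
    have hN : 0 < 2 ^ k := Nat.pow_pos (by norm_num)
    have h12 : 12 ≤ k := by omega
    refine ⟨fun i => if i.val < 2^k then Fin.snoc (g ((i.val : ℕ) : ZMod (2^k))) false
      else Fin.snoc (flip12 (g (((2*2^k - 1 - i.val : ℕ) : ZMod (2^k))))) true, ?_, ?_⟩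
    · rw [Fintype.bijective_iff_injective_and_card]
      constructor
      · intro i j hij
        beta_reduce at hij
        have hi : i.val < 2 * 2 ^ k := h2 ▸ ZMod.val_lt i
        have hj : j.val < 2 * 2 ^ k := h2 ▸ ZMod.val_lt j
        apply ZMod.val_injective
        split_ifs at hij with ci cj cj
        · obtain ⟨he, -⟩ := snoc_inj hij
          have := hgb.1 he
          rw [← ZMod.val_cast_of_lt (n := 2^k) ci, ← ZMod.val_cast_of_lt (n := 2^k) cj, this]
        · exact absurd (snoc_inj hij).2 (by simp)
        · exact absurd (snoc_inj hij).2 (by simp)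
        · obtain ⟨he, -⟩ := snoc_inj hij
          have he2 := hgb.1 (flip12_inj he)
          have hti : 2*2^k - 1 - i.val < 2^k := by omega
          have htj : 2*2^k - 1 - j.val < 2^k := by omega
          have := ZMod.val_cast_of_lt (n := 2^k) hti
          have := ZMod.val_cast_of_lt (n := 2^k) htj
          have : 2*2^k - 1 - i.val = 2*2^k - 1 - j.val := by
            rw [← ZMod.val_cast_of_lt (n := 2^k) hti, ← ZMod.val_cast_of_lt (n := 2^k) htj, he2]
          omega
      · rw [ZMod.card]
        simp [Fintype.card_fun]
    · intro i
      beta_reduce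
      have hi : i.val < 2 * 2 ^ k := h2 ▸ ZMod.val_lt i
      have hval : (i + 1).val = (i.val + 1) % (2 * 2 ^ k) := by
        rw [ZMod.val_add, ZMod.val_one_eq_one_mod,
          Nat.mod_eq_of_lt (show 1 < 2 ^ (k+1) by rw [h2]; omega), ← h2]
      rcases lt_trichotomy (i.val + 1) (2^k) with hc | hc | hc
      · -- both bottom
        have hv : (i + 1).val = i.val + 1 := by rw [hval, Nat.mod_eq_of_lt (by omega)]
        rw [if_pos (by omega : i.val < 2^k), if_pos (by omega : (i+1).val < 2^k), hv,
          ham_snoc, if_pos rfl, Nat.cast_add, Nat.cast_one, hgd]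
      · -- junction: bottom to top
        have hv : (i + 1).val = 2^k := by rw [hval, Nat.mod_eq_of_lt (by omega)]; omega
        rw [if_pos (by omega : i.val < 2^k), if_neg (by omega : ¬ (i+1).val < 2^k), hv,
          show 2*2^k - 1 - 2^k = i.val by omega, ham_snoc, if_neg (by simp),
          ham_flip12_self h12]
      · -- top
        rcases Nat.lt_or_ge (i.val + 1) (2 * 2 ^ k) with hc2 | hc2
        · -- both top
          have hv : (i + 1).val = i.val + 1 := by rw [hval, Nat.mod_eq_of_lt hc2]
          rw [if_neg (by omega : ¬ i.val < 2^k), if_neg (by omega : ¬ (i+1).val < 2^k), hv,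
            ham_snoc, if_pos rfl, ham_flip12, hammingDist_comm,
            show 2*2^k - 1 - i.val = (2*2^k - 1 - (i.val + 1)) + 1 by omega,
            Nat.cast_add, Nat.cast_one, hgd]
        · -- junction: top back to start
          have hiv : i.val = 2 * 2 ^ k - 1 := by omega
          have hv : (i + 1).val = 0 := by
            rw [hval, hiv, show 2*2^k - 1 + 1 = 2*2^k by omega, Nat.mod_self]
          rw [if_neg (by omega : ¬ i.val < 2^k), if_pos (by rw [hv]; omega), hv, hiv,
            show 2*2^k - 1 - (2*2^k - 1) = 0 by omega, Nat.cast_zero, ham_snoc,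
            if_neg (by simp), hammingDist_comm, ham_flip12_self h12]
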